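/- Fix m ≥ 1 and n = 4m, and define 𝓛, A, B as follows: 𝓛 is the set of pairs (U, V) of subsets of [n] each containing exactly one element from every interval I_i = {4(i−1)+1, ..., 4i}, A = {(U,V) ∈ 𝓛 : |U ∩ V| odd}, B = 𝓛 \ A. Let L = {(U,V) : U ∩ V ≠ ∅}. Then |A ∩ L| − |B ∩ L| = |A| − |B ∩ L| = 12^m − 2^{3m}. -/

import Mathlib

open Finset


section Aux
variable {m : ℕ}

def pt (m : ℕ) (i : Fin m) (a : Fin 4) : Fin (4 * m) :=
  ⟨4 * i.1 + a.1, by have := i.2; have := a.2; omega⟩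

lemma pt_inj {i j : Fin m} {a b : Fin 4} (h : pt m i a = pt m j b) : i = j ∧ a = b := by
  have h' : 4 * i.1 + a.1 = 4 * j.1 + b.1 := congrArg Fin.val h
  have ha := a.2; have hb := b.2
  exact ⟨Fin.ext (by omega), Fin.ext (by omega)⟩

def embS (m : ℕ) (f : Fin m → Fin 4) : Finset (Fin (4 * m)) :=
  univ.image fun i => pt m i (f i)

lemma mem_embS {f : Fin m → Fin 4} {x : Fin (4 * m)} :
    x ∈ embS m f ↔ ∃ i, x = pt m i (f i) := by
  simp [embS, eq_comm]

lemma filter_embS (f : Fin m → Fin 4) {i : ℕ} (hi : i < m) :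
    (embS m f).filter (fun x => 4 * i ≤ x.1 ∧ x.1 < 4 * i + 4) = {pt m ⟨i, hi⟩ (f ⟨i, hi⟩)} := by
  ext x
  simp only [mem_filter, mem_embS, mem_singleton]
  constructor
  · rintro ⟨⟨j, rfl⟩, h1, h2⟩
    have hfj := (f j).2
    have hj : (j : ℕ) = i := by
      simp only [pt] at h1 h2
      omega
    have : j = (⟨i, hi⟩ : Fin m) := Fin.ext (by simpa using hj)
    subst this; rfl
  · rintro rfl
    have hf := (f ⟨i, hi⟩).2
    refine ⟨⟨_, rfl⟩, ?_, ?_⟩ <;> simp [pt] <;> omega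

lemma embS_injective : Function.Injective (embS m) := by
  intro f g h
  funext i
  have hx : pt m i (f i) ∈ embS m g := h ▸ mem_embS.2 ⟨i, rfl⟩
  obtain ⟨j, hj⟩ := mem_embS.1 hx
  obtain ⟨h1, h2⟩ := pt_inj hj
  rw [h2, h1]

lemma inter_embS (f g : Fin m → Fin 4) :
    embS m f ∩ embS m g = (univ.filter fun i => f i = g i).image (fun i => pt m i (f i)) := by
  ext x
  simp only [mem_inter, mem_embS, mem_image, mem_filter, mem_univ, true_and]
  constructor
  · rintro ⟨⟨i, rfl⟩, j, hj⟩
    obtain ⟨h1, h2⟩ := pt_inj hj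
    exact ⟨i, by rw [h2, h1], rfl⟩
  · rintro ⟨i, h, rfl⟩
    exact ⟨⟨i, rfl⟩, i, by rw [h]⟩

lemma card_inter_embS (f g : Fin m → Fin 4) :
    (embS m f ∩ embS m g).card = (univ.filter fun i => f i = g i).card := by
  rw [inter_embS]
  exact card_image_of_injOn (fun i _ j _ h => (pt_inj h).1)

lemma inter_embS_empty (f g : Fin m → Fin 4) :
    embS m f ∩ embS m g = ∅ ↔ ∀ i, f i ≠ g i := by
  rw [← Finset.card_eq_zero, card_inter_embS, Finset.card_eq_zero, Finset.filter_eq_empty_iff]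
  simp

lemma surj_embS (U : Finset (Fin (4 * m)))
    (h : ∀ i < m, (U.filter (fun x => 4 * i ≤ x.1 ∧ x.1 < 4 * i + 4)).card = 1) :
    ∃ f, embS m f = U := by
  have key : ∀ i : Fin m, ∃ a : Fin 4,
      U.filter (fun x => 4 * i.1 ≤ x.1 ∧ x.1 < 4 * i.1 + 4) = {pt m i a} := by
    intro i
    obtain ⟨x, hx⟩ := card_eq_one.1 (h i.1 i.2)
    have hxm : x ∈ U.filter (fun x => 4 * i.1 ≤ x.1 ∧ x.1 < 4 * i.1 + 4) :=
      hx ▸ mem_singleton_self x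
    rw [mem_filter] at hxm
    refine ⟨⟨x.1 - 4 * i.1, by omega⟩, ?_⟩
    rw [hx]
    congr 1
    apply Fin.ext
    simp only [pt]
    omega
  choose f hf using key
  refine ⟨f, ?_⟩
  ext x
  rw [mem_embS]
  constructor
  · rintro ⟨i, rfl⟩
    have : pt m i (f i) ∈ U.filter (fun x => 4 * i.1 ≤ x.1 ∧ x.1 < 4 * i.1 + 4) :=
      (hf i) ▸ mem_singleton_self _
    exact (mem_filter.1 this).1
  · intro hx
    have hx2 := x.2
    have hq : x.1 / 4 < m := by omega
    refine ⟨⟨x.1 / 4, hq⟩, ?_⟩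
    have hm : x ∈ U.filter (fun y => 4 * ((⟨x.1 / 4, hq⟩ : Fin m) : ℕ) ≤ y.1 ∧
        y.1 < 4 * ((⟨x.1 / 4, hq⟩ : Fin m) : ℕ) + 4) := mem_filter.2 ⟨hx, by simp; omega⟩
    rw [hf ⟨x.1 / 4, hq⟩] at hm
    exact mem_singleton.1 hm

lemma sum_transfer (m : ℕ) (w : Finset (Fin (4*m)) × Finset (Fin (4*m)) → ℤ) :
    ∑ p ∈ (univ.filter (fun p : Finset (Fin (4*m)) × Finset (Fin (4*m)) =>
        (∀ i < m, (p.1.filter (fun x => 4*i ≤ x.1 ∧ x.1 < 4*i+4)).card = 1) ∧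
        (∀ i < m, (p.2.filter (fun x => 4*i ≤ x.1 ∧ x.1 < 4*i+4)).card = 1))), w p
    = ∑ q : (Fin m → Fin 4) × (Fin m → Fin 4), w (embS m q.1, embS m q.2) := by
  symm
  apply Finset.sum_nbij (i := fun q : (Fin m → Fin 4) × (Fin m → Fin 4) =>
    (embS m q.1, embS m q.2))
  · intro q _
    rw [mem_filter]
    refine ⟨mem_univ _, ?_, ?_⟩ <;> intro i hi <;>
      simp [filter_embS _ hi]
  · intro q1 _ q2 _ h
    simp only [Prod.mk.injEq] at h
    exact Prod.ext (embS_injective h.1) (embS_injective h.2)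
  · intro p hp
    simp only [Finset.coe_filter, Set.mem_setOf_eq, mem_univ, true_and] at hp
    obtain ⟨f, hfU⟩ := surj_embS p.1 hp.1
    obtain ⟨g, hgU⟩ := surj_embS p.2 hp.2
    exact ⟨(f, g), by simp, by simp [hfU, hgU]⟩
  · intro q _
    rfl

end Aux
section Comp
variable {m : ℕ}

example (f g : Fin m → Fin 4) : True := trivial

lemma sum_sign (m : ℕ) :
    ∑ q : (Fin m → Fin 4) × (Fin m → Fin 4),
      (-1 : ℤ) ^ ((univ.filter fun i => q.1 i = q.2 i).card) = 2 ^ (3 * m) := by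
  have step1 : ∀ q : (Fin m → Fin 4) × (Fin m → Fin 4),
      (-1 : ℤ) ^ ((univ.filter fun i => q.1 i = q.2 i).card)
      = ∏ i : Fin m, (-1 : ℤ) ^ (if q.1 i = q.2 i then 1 else 0) := by
    intro q
    rw [Finset.prod_pow_eq_pow_sum, Finset.card_filter]
  simp_rw [step1]
  rw [show (∑ q : (Fin m → Fin 4) × (Fin m → Fin 4),
      ∏ i : Fin m, (-1 : ℤ) ^ (if q.1 i = q.2 i then 1 else 0))
      = ∑ h : Fin m → Fin 4 × Fin 4,
      ∏ i : Fin m, (-1 : ℤ) ^ (if (h i).1 = (h i).2 then 1 else 0) from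
    (Fintype.sum_equiv (Equiv.arrowProdEquivProdArrow (Fin m) (fun _ => Fin 4) (fun _ => Fin 4)) _ _
      (fun h => rfl)).symm]
  rw [← Fintype.sum_pow (fun ab : Fin 4 × Fin 4 => (-1 : ℤ) ^ (if ab.1 = ab.2 then 1 else 0)) m]
  have : (∑ ab : Fin 4 × Fin 4, (-1 : ℤ) ^ (if ab.1 = ab.2 then 1 else 0)) = 8 := by decide
  rw [this, pow_mul]
  norm_num

lemma sum_disj (m : ℕ) :
    ∑ q : (Fin m → Fin 4) × (Fin m → Fin 4),
      (if ∀ i, q.1 i ≠ q.2 i then (1 : ℤ) else 0) = 12 ^ m := by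
  have step1 : ∀ q : (Fin m → Fin 4) × (Fin m → Fin 4),
      (if ∀ i, q.1 i ≠ q.2 i then (1 : ℤ) else 0)
      = ∏ i : Fin m, (if q.1 i ≠ q.2 i then (1 : ℤ) else 0) := by
    intro q
    rw [Fintype.prod_boole]
    congr 1
  simp_rw [step1]
  rw [show (∑ q : (Fin m → Fin 4) × (Fin m → Fin 4),
      ∏ i : Fin m, (if q.1 i ≠ q.2 i then (1 : ℤ) else 0))
      = ∑ h : Fin m → Fin 4 × Fin 4,
      ∏ i : Fin m, (if (h i).1 ≠ (h i).2 then (1 : ℤ) else 0) from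
    (Fintype.sum_equiv (Equiv.arrowProdEquivProdArrow (Fin m) (fun _ => Fin 4) (fun _ => Fin 4)) _ _
      (fun h => rfl)).symm]
  rw [← Fintype.sum_pow (fun ab : Fin 4 × Fin 4 => (if ab.1 ≠ ab.2 then (1 : ℤ) else 0)) m]
  have : (∑ ab : Fin 4 × Fin 4, (if ab.1 ≠ ab.2 then (1 : ℤ) else 0)) = 12 := by decide
  rw [this]

end Comp

/-- `[n]` is modelled as `Fin n` (0-indexed), the interval `I_i` (for `i < m`) being
`{4*i, ..., 4*i+3}`. -/
theorem stmt_7 (m : ℕ) (hm : 1 ≤ m) (n : ℕ) (hn : n = 4 * m) :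
    let 𝓛 : Finset (Finset (Fin n) × Finset (Fin n)) :=
      Finset.univ.filter (fun p =>
        (∀ i < m, (p.1.filter (fun x => 4 * i ≤ x.1 ∧ x.1 < 4 * i + 4)).card = 1) ∧
        (∀ i < m, (p.2.filter (fun x => 4 * i ≤ x.1 ∧ x.1 < 4 * i + 4)).card = 1))
    let A := 𝓛.filter (fun p => Odd (p.1 ∩ p.2).card)
    let B := 𝓛 \ A
    let L : Finset (Finset (Fin n) × Finset (Fin n)) :=
      Finset.univ.filter (fun p => p.1 ∩ p.2 ≠ ∅)
    ((A ∩ L).card : ℤ) - ((B ∩ L).card : ℤ) = (A.card : ℤ) - ((B ∩ L).card : ℤ) ∧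
    (A.card : ℤ) - ((B ∩ L).card : ℤ) = 12 ^ m - 2 ^ (3 * m) := by
  subst hn
  intro 𝓛 A B L
  have h𝓛 : 𝓛 = Finset.univ.filter (fun p : Finset (Fin (4*m)) × Finset (Fin (4*m)) =>
        (∀ i < m, (p.1.filter (fun x => 4 * i ≤ x.1 ∧ x.1 < 4 * i + 4)).card = 1) ∧
        (∀ i < m, (p.2.filter (fun x => 4 * i ≤ x.1 ∧ x.1 < 4 * i + 4)).card = 1)) := rfl
  have hA : A = 𝓛.filter (fun p => Odd (p.1 ∩ p.2).card) := rfl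
  have hB : B = 𝓛 \ A := rfl
  have hL : L = Finset.univ.filter
      (fun p : Finset (Fin (4*m)) × Finset (Fin (4*m)) => p.1 ∩ p.2 ≠ ∅) := rfl
  -- A ⊆ L
  have hA_ne : ∀ p ∈ A, p.1 ∩ p.2 ≠ ∅ := by
    intro p hp he
    have hodd : Odd (p.1 ∩ p.2).card := (mem_filter.1 hp).2
    rw [he] at hodd
    simp at hodd
  have hAL : A ∩ L = A := by
    ext p
    constructor
    · exact fun h => (mem_inter.1 h).1
    · exact fun h => mem_inter.2 ⟨h, mem_filter.2 ⟨mem_univ _, hA_ne p h⟩⟩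
  set D := 𝓛.filter (fun p => p.1 ∩ p.2 = ∅) with hD
  have hDB : D ⊆ B := by
    intro p hp
    rw [hD, mem_filter] at hp
    rw [hB, mem_sdiff]
    refine ⟨hp.1, fun hpA => ?_⟩
    have := (mem_filter.1 hpA).2
    rw [hp.2] at this
    simp at this
  have hBL : B ∩ L = B \ D := by
    ext p
    constructor
    · intro h
      obtain ⟨hBp, hLp⟩ := mem_inter.1 h
      have hne : p.1 ∩ p.2 ≠ ∅ := (mem_filter.1 hLp).2
      exact mem_sdiff.2 ⟨hBp, fun hpD => hne (mem_filter.1 hpD).2⟩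
    · intro h
      obtain ⟨hBp, hnD⟩ := mem_sdiff.1 h
      have hp𝓛 : p ∈ 𝓛 := (mem_sdiff.1 (hB ▸ hBp)).1
      exact mem_inter.2 ⟨hBp, mem_filter.2 ⟨mem_univ _,
        fun he => hnD (mem_filter.2 ⟨hp𝓛, he⟩)⟩⟩
  -- signed sum equals B - A
  have hsum1 : ∑ p ∈ 𝓛, (-1 : ℤ) ^ (p.1 ∩ p.2).card = (B.card : ℤ) - (A.card : ℤ) := by
    have hB' : B = 𝓛.filter (fun p => ¬ Odd (p.1 ∩ p.2).card) := by
      rw [hB, hA, Finset.filter_not]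
    rw [← Finset.sum_filter_add_sum_filter_not 𝓛 (fun p => Odd (p.1 ∩ p.2).card),
      Finset.sum_congr rfl (fun p hp => Odd.neg_one_pow (mem_filter.1 hp).2),
      Finset.sum_congr rfl
        (fun p hp => Even.neg_one_pow (Nat.not_odd_iff_even.1 (mem_filter.1 hp).2)),
      Finset.sum_const, Finset.sum_const, ← hA, ← hB']
    simp
    ring
  -- signed sum equals 2 ^ (3m)
  have hsum2 : ∑ p ∈ 𝓛, (-1 : ℤ) ^ (p.1 ∩ p.2).card = 2 ^ (3 * m) := by
    rw [h𝓛, sum_transfer m (fun p => (-1 : ℤ) ^ (p.1 ∩ p.2).card)]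
    rw [Finset.sum_congr rfl (fun q _ => by rw [card_inter_embS])]
    exact sum_sign m
  -- |D| = 12 ^ m
  have hDcard : (D.card : ℤ) = 12 ^ m := by
    have h1 : (D.card : ℤ) = ∑ p ∈ 𝓛, (if p.1 ∩ p.2 = ∅ then (1 : ℤ) else 0) := by
      rw [hD, Finset.card_filter, Nat.cast_sum]
      exact Finset.sum_congr rfl (fun p _ => by split <;> simp)
    rw [h1, h𝓛, sum_transfer m (fun p => if p.1 ∩ p.2 = ∅ then (1 : ℤ) else 0)]
    rw [Finset.sum_congr rfl
      (fun q _ => if_congr (inter_embS_empty q.1 q.2) rfl rfl)]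
    exact sum_disj m
  have hcardBL : ((B ∩ L).card : ℤ) = (B.card : ℤ) - (D.card : ℤ) := by
    rw [hBL, Finset.card_sdiff_of_subset hDB, Nat.cast_sub (card_le_card hDB)]
  refine ⟨by rw [hAL], ?_⟩
  have hBA : (B.card : ℤ) - (A.card : ℤ) = 2 ^ (3 * m) := hsum1.symm.trans hsum2
  rw [hcardBL]
  linarith [hDcard]
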